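/- Let d, k ≥ 1. The family of permutation operators (V_d(π))_{π ∈ S_k} on (ℂ^d)^{⊗k} is linearly independent over ℂ if k ≤ d, and is linearly dependent if k > d; in the latter case, Σ_{π ∈ S_k} sgn(π) V_d(π) = 0. -/

import Mathlib

open Matrix

/-- The permutation operator `V_d(π)` on `(ℂ^d)^{⊗k} ≅ ℂ^{Fin k → Fin d}`, with entries
`(V_d(π))_{f,g} = 1` if `f ∘ π = g` and `0` otherwise. -/
def permOp (d k : ℕ) (π : Equiv.Perm (Fin k)) :
    Matrix (Fin k → Fin d) (Fin k → Fin d) ℂ :=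
  Matrix.of fun f g => if f ∘ π = g then 1 else 0

/-- The family of permutation operators `(V_d(π))_{π ∈ S_k}` is linearly
independent over `ℂ` when `k ≤ d`, and linearly dependent when `k > d`; in the latter
case the signed sum `Σ_π sgn(π) V_d(π)` vanishes. -/
theorem permOp_linearIndependent_iff {d k : ℕ} (hd : 1 ≤ d) (hk : 1 ≤ k) :
    (k ≤ d → LinearIndependent ℂ (permOp d k)) ∧
    (d < k → ¬ LinearIndependent ℂ (permOp d k) ∧
      ∑ π : Equiv.Perm (Fin k), ((Equiv.Perm.sign π : ℤ) : ℂ) • permOp d k π = 0) := by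
  constructor
  · intro hkd
    rw [Fintype.linearIndependent_iff]
    intro c hc π
    set f : Fin k → Fin d := Fin.castLE hkd with hf
    have hfi : Function.Injective f := Fin.castLE_injective hkd
    have := congrFun (congrFun hc f) (f ∘ π)
    simp only [Matrix.sum_apply, Matrix.smul_apply, permOp, Matrix.of_apply,
      smul_eq_mul, Matrix.zero_apply] at this
    have key : ∀ σ : Equiv.Perm (Fin k), (f ∘ σ = f ∘ π) ↔ σ = π := by
      intro σ
      constructor
      · intro h
        exact Equiv.ext fun x => hfi (congrFun h x)
      · rintro rfl; rfl
    rw [Finset.sum_congr rfl (fun σ _ => by rw [if_congr (key σ) rfl rfl])] at this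
    simpa using this
  · intro hdk
    have hzero : ∑ π : Equiv.Perm (Fin k),
        ((Equiv.Perm.sign π : ℤ) : ℂ) • permOp d k π = 0 := by
      ext f g
      simp only [Matrix.sum_apply, Matrix.smul_apply, permOp, Matrix.of_apply,
        smul_eq_mul, Matrix.zero_apply]
      obtain ⟨i, j, hne, hij⟩ : ∃ i j, i ≠ j ∧ f i = f j := by
        obtain ⟨i, j, hne, hij⟩ := Fintype.exists_ne_map_eq_of_card_lt f (by simpa)
        exact ⟨i, j, hne, hij⟩
      set τ := Equiv.swap i j with hτdef
      have hτ : f ∘ τ = f := by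
        funext x
        rcases eq_or_ne x i with rfl | hxi
        · simp [τ, hij]
        · rcases eq_or_ne x j with rfl | hxj
          · simp [τ, hij]
          · simp [τ, Equiv.swap_apply_of_ne_of_ne hxi hxj]
      set F : Equiv.Perm (Fin k) → ℂ :=
        fun π => ((Equiv.Perm.sign π : ℤ) : ℂ) * if f ∘ π = g then 1 else 0 with hF
      have hre : ∑ π, F π = ∑ π, F (τ * π) :=
        (Fintype.sum_equiv (Equiv.mulLeft τ) _ _ (fun π => rfl)).symm
      have hneg : ∀ π, F (τ * π) = - F π := by
        intro π
        have h1 : f ∘ ⇑(τ * π) = f ∘ π := by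
          rw [Equiv.Perm.coe_mul, ← Function.comp_assoc, hτ]
        have h2 : Equiv.Perm.sign (τ * π) = - Equiv.Perm.sign π := by
          rw [Equiv.Perm.sign_mul, Equiv.Perm.sign_swap hne, neg_one_mul]
        rw [hF]
        simp only [h1, h2, Units.val_neg, Int.cast_neg, neg_mul]
      have hSS : ∑ π, F π = - ∑ π, F π := by
        calc ∑ π, F π = ∑ π, F (τ * π) := hre
          _ = ∑ π, -F π := by simp_rw [hneg]
          _ = - ∑ π, F π := Finset.sum_neg_distrib F
      have hS : ∑ π, F π + ∑ π, F π = 0 := by nth_rewrite 1 [hSS]; ring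
      exact add_self_eq_zero.mp hS
    refine ⟨?_, hzero⟩
    rw [Fintype.linearIndependent_iff]
    intro h
    have := h (fun π => ((Equiv.Perm.sign π : ℤ) : ℂ)) hzero 1
    simp at this
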